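/- Let T be a property of topological spaces that is invariant under homeomorphism. Let φ : M → N and φ' : M → N' be topological embeddings with open images, let B ⊆ frontier(φ(M)) and B' ⊆ frontier(φ'(M)), and suppose B and B' are equivalent (each covers the other). Say B satisfies the T neighbourhood property (TNP) if every open U ⊇ B in N contains an open V ⊇ B such that the subspace V ∩ φ(M) satisfies T. If B satisfies the TNP, then B' satisfies the TNP. -/

import Mathlib

open Set Topology Filter Metric

/-- `B` (a boundary set of the envelopment `φ`) covers `B'` (a boundary set of the
envelopment `φ'`): for every open neighbourhood `U` of `B` there is an open
neighbourhood `U'` of `B'` with `φ(φ'⁻¹(U' ∩ φ'(M))) ⊆ U`. -/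
def Covers {M N N' : Type*} [TopologicalSpace M] [TopologicalSpace N] [TopologicalSpace N']
    (φ : M → N) (φ' : M → N') (B : Set N) (B' : Set N') : Prop :=
  ∀ U : Set N, IsOpen U → B ⊆ U →
    ∃ U' : Set N', IsOpen U' ∧ B' ⊆ U' ∧ φ '' (φ' ⁻¹' (U' ∩ range φ')) ⊆ U

/-- An embedding restricts to a homeomorphism from any subset onto its image. -/
lemma embedding_image_homeo {X Y : Type*} [TopologicalSpace X] [TopologicalSpace Y]
    {f : X → Y} (hf : Topology.IsEmbedding f) (S : Set X) :
    Nonempty (↥S ≃ₜ ↥(f '' S)) := by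
  have hemb : Topology.IsEmbedding (fun x : S => f x) :=
    hf.comp Topology.IsEmbedding.subtypeVal
  exact ⟨(Topology.IsEmbedding.toHomeomorph hemb).trans
    (Homeomorph.setCongr (Set.image_eq_range f S).symm)⟩

theorem tnp_invariant {M : Type*} {N N' : Type u} [TopologicalSpace M]
    [TopologicalSpace N] [TopologicalSpace N']
    (T : (X : Type u) → [TopologicalSpace X] → Prop)
    (hT : ∀ (X Y : Type u) [TopologicalSpace X] [TopologicalSpace Y],
      Nonempty (X ≃ₜ Y) → T X → T Y)
    {φ : M → N} {φ' : M → N'}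
    (hφ : Topology.IsEmbedding φ) (hφo : IsOpen (range φ))
    (hφ' : Topology.IsEmbedding φ') (hφ'o : IsOpen (range φ'))
    {B : Set N} {B' : Set N'}
    (hB : B ⊆ frontier (range φ)) (hB' : B' ⊆ frontier (range φ'))
    (h1 : Covers φ φ' B B') (h2 : Covers φ' φ B' B)
    (htnp : ∀ U : Set N, IsOpen U → B ⊆ U →
      ∃ V : Set N, IsOpen V ∧ B ⊆ V ∧ V ⊆ U ∧ T ↥(V ∩ range φ)) :
    ∀ U' : Set N', IsOpen U' → B' ⊆ U' →
      ∃ V' : Set N', IsOpen V' ∧ B' ⊆ V' ∧ V' ⊆ U' ∧ T ↥(V' ∩ range φ') := by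
  intro U' hU'o hB'U'
  obtain ⟨U, hUo, hBU, hUsub⟩ := h2 U' hU'o hB'U'
  obtain ⟨V, hVo, hBV, hVU, hTV⟩ := htnp U hUo hBU
  obtain ⟨W', hW'o, hB'W', hW'sub⟩ := h1 V hVo hBV
  have hφ'open : Topology.IsOpenEmbedding φ' := ⟨hφ', hφ'o⟩
  set S : Set M := φ ⁻¹' V with hS
  set A' : Set N' := φ' '' S with hA'
  have hA'o : IsOpen A' := hφ'open.isOpenMap _ (hVo.preimage hφ.continuous)
  have hA'U' : A' ⊆ U' := by
    apply Set.Subset.trans _ hUsub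
    apply Set.image_mono
    intro m hm
    exact ⟨hVU hm, ⟨m, rfl⟩⟩
  have key : W' ∩ range φ' ⊆ A' := by
    rintro x ⟨hxW, m, rfl⟩
    have hm : φ m ∈ V := hW'sub ⟨m, ⟨hxW, ⟨m, rfl⟩⟩, rfl⟩
    exact ⟨m, hm, rfl⟩
  set C : Set N' := closure (range φ' \ A') with hC
  refine ⟨A' ∪ (U' ∩ W' ∩ Cᶜ), ?_, ?_, ?_, ?_⟩
  · exact hA'o.union ((hU'o.inter hW'o).inter isClosed_closure.isOpen_compl)
  · intro b hb
    right
    refine ⟨⟨hB'U' hb, hB'W' hb⟩, ?_⟩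
    have hsub : range φ' \ A' ⊆ W'ᶜ := by
      intro x hx hxW
      exact hx.2 (key ⟨hxW, hx.1⟩)
    have : C ⊆ W'ᶜ := closure_minimal hsub hW'o.isClosed_compl
    intro hbC
    exact this hbC (hB'W' hb)
  · rintro x (hx | hx)
    · exact hA'U' hx
    · exact hx.1.1
  · have hVeq : (A' ∪ (U' ∩ W' ∩ Cᶜ)) ∩ range φ' = A' := by
      apply Set.Subset.antisymm
      · rintro x ⟨hx | hx, hxr⟩
        · exact hx
        · by_contra hxA
          exact hx.2 (subset_closure ⟨hxr, hxA⟩)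
      · intro x hx
        exact ⟨Or.inl hx, Set.image_subset_range _ _ hx⟩
    have heq : V ∩ range φ = φ '' S := (Set.image_preimage_eq_inter_range).symm
    have e1 := (embedding_image_homeo hφ S).some
    have e2 := (embedding_image_homeo hφ' S).some
    refine hT ↥(V ∩ range φ) _ ?_ hTV
    exact ⟨(Homeomorph.setCongr heq).trans (e1.symm.trans (e2.trans
      (Homeomorph.setCongr hVeq.symm)))⟩
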